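/- For all integers n ≥ 1 and k ≥ n + 2, every 2-coloring of the Boolean lattice Q_k in which both the empty set and the full ground set [k] are colored red contains a red copy of Q_2 or a blue copy of Q_n. -/

import Mathlib

/-- A red copy of the Boolean lattice `Q m` inside the 2-colored Boolean lattice `Q N`,
where `c S = true` means `S` is red and `c S = false` means `S` is blue. -/
def HasRedCopy (m N : ℕ) (c : Finset (Fin N) → Bool) : Prop :=
  ∃ f : Finset (Fin m) → Finset (Fin N),
    Function.Injective f ∧
    (∀ S T : Finset (Fin m), S ⊆ T ↔ f S ⊆ f T) ∧
    (∀ S : Finset (Fin m), c (f S) = true)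

/-- A blue copy of the Boolean lattice `Q m` inside the 2-colored Boolean lattice `Q N`. -/
def HasBlueCopy (m N : ℕ) (c : Finset (Fin N) → Bool) : Prop :=
  ∃ f : Finset (Fin m) → Finset (Fin N),
    Function.Injective f ∧
    (∀ S T : Finset (Fin m), S ⊆ T ↔ f S ⊆ f T) ∧
    (∀ S : Finset (Fin m), c (f S) = false)

theorem red_top_bottom (n k : ℕ) (hn : 1 ≤ n) (hk : n + 2 ≤ k)
    (c : Finset (Fin k) → Bool)
    (hbot : c ∅ = true) (htop : c Finset.univ = true) :
    HasRedCopy 2 k c ∨ HasBlueCopy n k c := by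
  by_cases hcomp : ∀ A B : Finset (Fin k), c A = true → c B = true → A ⊆ B ∨ B ⊆ A
  · -- red sets form a chain: find a blue copy of Q_n
    right
    -- some singleton is blue
    have hx : ∃ x : Fin k, c {x} = false := by
      by_contra h
      push_neg at h
      have h0 : c {(⟨0, by omega⟩ : Fin k)} = true := by
        have := h ⟨0, by omega⟩; simpa using this
      have h1 : c {(⟨1, by omega⟩ : Fin k)} = true := by
        have := h ⟨1, by omega⟩; simpa using this
      rcases hcomp _ _ h0 h1 with hs | hs <;>
        · rw [Finset.singleton_subset_singleton] at hs
          exact absurd (Fin.mk.injEq .. ▸ hs) (by omega)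
    obtain ⟨x, hxblue⟩ := hx
    -- minimal red set containing x
    have hFne : (Finset.univ.filter (fun S : Finset (Fin k) => c S = true ∧ x ∈ S)).Nonempty :=
      ⟨Finset.univ, by simp [htop]⟩
    obtain ⟨M, hMmin'⟩ := Finset.exists_minimal hFne
    obtain ⟨hMF, hMmin⟩ : M ∈ Finset.univ.filter (fun S : Finset (Fin k) => c S = true ∧ x ∈ S) ∧
        ∀ S ∈ Finset.univ.filter (fun S : Finset (Fin k) => c S = true ∧ x ∈ S), ¬ S < M :=
      ⟨hMmin'.prop, fun S hS h => hMmin'.not_lt hS h⟩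
    simp only [Finset.mem_filter, Finset.mem_univ, true_and] at hMF
    obtain ⟨hMred, hxM⟩ := hMF
    -- M ≠ {x}, so there is y ∈ M, y ≠ x
    have hMne : M ≠ {x} := by
      intro h; rw [h, hxblue] at hMred; exact Bool.false_ne_true hMred
    have hy : ∃ y ∈ M, y ≠ x := by
      by_contra h
      push_neg at h
      exact hMne ((Finset.eq_singleton_iff_unique_mem).mpr ⟨hxM, h⟩)
    obtain ⟨y, hyM, hyx⟩ := hy
    -- every set containing x but not y is blue
    have hblue : ∀ S : Finset (Fin k), x ∈ S → y ∉ S → c S = false := by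
      intro S hxS hyS
      by_contra h
      have hS : c S = true := by
        cases hcS : c S with
        | false => exact absurd hcS h
        | true => rfl
      rcases hcomp S M hS hMred with hSM | hMS
      · have hSeq : S = M := by
          by_contra hne
          exact hMmin S (by simp [hS, hxS])
            (lt_of_le_of_ne (Finset.le_iff_subset.mpr hSM) hne)
        exact hyS (hSeq ▸ hyM)
      · exact hyS (hMS hyM)
    -- choose n elements avoiding x and y
    have hcard : n ≤ (({x, y} : Finset (Fin k))ᶜ).card := by
      rw [Finset.card_compl]
      have h2 : ({x, y} : Finset (Fin k)).card ≤ 2 :=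
        (Finset.card_insert_le _ _).trans (by simp)
      have : Fintype.card (Fin k) = k := Fintype.card_fin k
      omega
    set e := Finset.orderEmbOfCardLe _ hcard with he
    set g : Fin n → Fin k := fun i => e i with hg
    have hginj : Function.Injective g := e.injective
    have hgx : ∀ i, g i ≠ x := by
      intro i h
      have hm : g i ∈ ({x, y} : Finset (Fin k))ᶜ := Finset.orderEmbOfCardLe_mem _ hcard i
      rw [h] at hm
      simp at hm
    have hgy : ∀ i, g i ≠ y := by
      intro i h
      have hm : g i ∈ ({x, y} : Finset (Fin k))ᶜ := Finset.orderEmbOfCardLe_mem _ hcard i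
      rw [h] at hm
      simp at hm
    have hxim : ∀ S : Finset (Fin n), x ∉ S.image g := by
      intro S hmem
      obtain ⟨i, _, hi⟩ := Finset.mem_image.mp hmem
      exact hgx i hi
    refine ⟨fun S => insert x (S.image g), ?_, ?_, ?_⟩
    · intro S T h
      have himg : S.image g = T.image g := by
        have h' := congrArg (fun A => Finset.erase A x) h
        simpa [Finset.erase_insert (hxim S), Finset.erase_insert (hxim T)] using h'
      exact Finset.image_injective hginj himg
    · intro S T
      constructor
      · intro h
        exact Finset.insert_subset_insert _ (Finset.image_subset_image h)
      · intro h i hi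
        have hmem := h (Finset.mem_insert_of_mem (Finset.mem_image_of_mem g hi))
        rcases Finset.mem_insert.mp hmem with heq | hmem'
        · exact absurd heq (hgx i)
        · obtain ⟨j, hj, hji⟩ := Finset.mem_image.mp hmem'
          rwa [← hginj hji]
    · intro S
      apply hblue
      · exact Finset.mem_insert_self _ _
      · simp only [Finset.mem_insert]
        rintro (h | hmem)
        · exact hyx h
        · obtain ⟨i, _, hi⟩ := Finset.mem_image.mp hmem
          exact hgy i hi
  · -- two incomparable red sets give a red Q_2
    left
    push_neg at hcomp
    obtain ⟨A, B, hA, hB, hAB, hBA⟩ := hcomp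
    have hAne : A ≠ ∅ := by rintro rfl; exact hAB (Finset.empty_subset _)
    have hBne : B ≠ ∅ := by rintro rfl; exact hBA (Finset.empty_subset _)
    have hAu : A ≠ Finset.univ := by rintro rfl; exact hBA (Finset.subset_univ _)
    have hBu : B ≠ Finset.univ := by rintro rfl; exact hAB (Finset.subset_univ _)
    have hne : A ≠ B := by rintro rfl; exact hAB (subset_refl _)
    have hUne : (Finset.univ : Finset (Fin k)) ≠ ∅ := by
      have : (⟨0, by omega⟩ : Fin k) ∈ (Finset.univ : Finset (Fin k)) := Finset.mem_univ _
      intro h; rw [h] at this; exact absurd this (Finset.notMem_empty _)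
    have hcases : ∀ S : Finset (Fin 2), S = ∅ ∨ S = {0} ∨ S = {1} ∨ S = Finset.univ := by
      decide
    set f : Finset (Fin 2) → Finset (Fin k) := fun S =>
      if S = ∅ then ∅ else if S = {0} then A else if S = {1} then B else Finset.univ with hf
    have f0 : f ∅ = ∅ := by simp [hf]
    have fA : f {0} = A := by
      simp (config := { decide := true }) [hf]
    have fB : f {1} = B := by
      simp (config := { decide := true }) [hf]
    have fU : f Finset.univ = Finset.univ := by
      simp (config := { decide := true }) [hf]
    refine ⟨f, ?_, ?_, ?_⟩
    · intro S T h
      rcases hcases S with rfl | rfl | rfl | rfl <;> rcases hcases T with rfl | rfl | rfl | rfl <;>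
        simp only [f0, fA, fB, fU] at h <;>
        first
          | rfl
          | exact absurd h.symm hAne
          | exact absurd h hAne
          | exact absurd h.symm hBne
          | exact absurd h hBne
          | exact absurd h.symm hUne
          | exact absurd h hUne
          | exact absurd h hne
          | exact absurd h.symm hne
          | exact absurd h hAu
          | exact absurd h.symm hAu
          | exact absurd h hBu
          | exact absurd h.symm hBu
    · intro S T
      rcases hcases S with rfl | rfl | rfl | rfl <;> rcases hcases T with rfl | rfl | rfl | rfl <;>
        simp only [f0, fA, fB, fU] <;>
        first
          | exact iff_of_true (by decide) (Finset.empty_subset _)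
          | exact iff_of_true (by decide) (Finset.subset_univ _)
          | exact iff_of_true (by decide) (subset_refl _)
          | exact iff_of_false (by decide) (fun h => hAne (Finset.subset_empty.mp h))
          | exact iff_of_false (by decide) (fun h => hBne (Finset.subset_empty.mp h))
          | exact iff_of_false (by decide) (fun h => hUne (Finset.subset_empty.mp h))
          | exact iff_of_false (by decide) hAB
          | exact iff_of_false (by decide) hBA
          | exact iff_of_false (by decide) (fun h => hAu (Finset.univ_subset_iff.mp h))
          | exact iff_of_false (by decide) (fun h => hBu (Finset.univ_subset_iff.mp h))
    · intro S
      rcases hcases S with rfl | rfl | rfl | rfl <;>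
        simp only [f0, fA, fB, fU] <;>
        first
          | exact hbot
          | exact hA
          | exact hB
          | exact htop
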